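/- The integer matrix $M = \begin{pmatrix} 2m+1 & 2m+1 & 2m^2+m \\ 0 & 4m+2 & 4m^2+4m+1 \\ 4m+2 & 0 & 4m^2+4m+1 \\ 0 & 0 & 8m^2+12m+4 \end{pmatrix}$ has Smith normal form with diagonal entries $2m+1$, $2m+1$, $(2m+1)(4m+4)$ (and a zero row), for every natural number $m$. Equivalently, $\mathbb{Z}^3 / (\text{row span of } M) \cong \mathbb{Z}/(2m+1) \oplus \mathbb{Z}/(2m+1) \oplus \mathbb{Z}/((2m+1)(4m+4))$. -/
import Mathlib

theorem stmt10 (m : ℕ) :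
    Nonempty
      (((Fin 3 → ℤ) ⧸
          Submodule.span ℤ
            ({![2 * (m : ℤ) + 1, 2 * m + 1, 2 * m ^ 2 + m],
              ![0, 4 * (m : ℤ) + 2, 4 * m ^ 2 + 4 * m + 1],
              ![4 * (m : ℤ) + 2, 0, 4 * m ^ 2 + 4 * m + 1],
              ![0, 0, 8 * (m : ℤ) ^ 2 + 12 * m + 4]} : Set (Fin 3 → ℤ))) ≃+
        (ZMod (2 * m + 1) × ZMod (2 * m + 1) × ZMod ((2 * m + 1) * (4 * m + 4)))) := by
  set φ0 : (Fin 3 → ℤ) →+ (ZMod (2*m+1) × ZMod (2*m+1) × ZMod ((2*m+1)*(4*m+4))) :=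
    { toFun := fun x => (((x 0 : ℤ) : ZMod (2*m+1)), ((x 1 : ℤ) : ZMod (2*m+1)),
        ((2*x 2 + x 1 - (2*(m:ℤ)+1)*x 0 : ℤ) : ZMod ((2*m+1)*(4*m+4)))),
      map_zero' := by simp,
      map_add' := fun x y => by
        simp only [Pi.add_apply, Prod.mk_add_mk, Prod.mk.injEq]
        refine ⟨by push_cast; ring, by push_cast; ring, by push_cast; ring⟩ } with hφ0
  set φ := φ0.toIntLinearMap with hφ
  have hmem : ∀ x : Fin 3 → ℤ, φ x = 0 ↔
      ((2*(m:ℤ)+1) ∣ x 0 ∧ (2*(m:ℤ)+1) ∣ x 1 ∧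
        ((2*(m:ℤ)+1)*(4*(m:ℤ)+4)) ∣ (2*x 2 + x 1 - (2*(m:ℤ)+1)*x 0)) := by
    intro x
    have : φ x = (((x 0 : ℤ) : ZMod (2*m+1)), ((x 1 : ℤ) : ZMod (2*m+1)),
        ((2*x 2 + x 1 - (2*(m:ℤ)+1)*x 0 : ℤ) : ZMod ((2*m+1)*(4*m+4)))) := rfl
    rw [this, show (0 : ZMod (2*m+1) × ZMod (2*m+1) × ZMod ((2*m+1)*(4*m+4)))
        = ((0 : ZMod (2*m+1)), (0 : ZMod (2*m+1)), (0 : ZMod ((2*m+1)*(4*m+4)))) from rfl,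
      Prod.mk.injEq, Prod.mk.injEq]
    constructor
    · rintro ⟨h1, h2, h3⟩
      rw [ZMod.intCast_zmod_eq_zero_iff_dvd] at h1 h2 h3
      push_cast at h1 h2 h3
      exact ⟨h1, h2, h3⟩
    · rintro ⟨h1, h2, h3⟩
      refine ⟨?_, ?_, ?_⟩ <;> rw [ZMod.intCast_zmod_eq_zero_iff_dvd] <;> push_cast <;> assumption
  have hker : Submodule.span ℤ
      ({![2 * (m : ℤ) + 1, 2 * m + 1, 2 * m ^ 2 + m],
        ![0, 4 * (m : ℤ) + 2, 4 * m ^ 2 + 4 * m + 1],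
        ![4 * (m : ℤ) + 2, 0, 4 * m ^ 2 + 4 * m + 1],
        ![0, 0, 8 * (m : ℤ) ^ 2 + 12 * m + 4]} : Set (Fin 3 → ℤ)) = LinearMap.ker φ := by
    apply le_antisymm
    · rw [Submodule.span_le]
      rintro x hx
      simp only [Set.mem_insert_iff, Set.mem_singleton_iff] at hx
      rcases hx with rfl | rfl | rfl | rfl <;>
          rw [SetLike.mem_coe, LinearMap.mem_ker, hmem] <;>
          refine ⟨?_, ?_, ?_⟩ <;>
          simp only [Matrix.cons_val_zero, Matrix.cons_val_one, Matrix.head_cons,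
            Matrix.cons_val_two, Matrix.tail_cons]
      · exact ⟨1, by ring⟩
      · exact ⟨1, by ring⟩
      · exact ⟨0, by ring⟩
      · exact ⟨0, by ring⟩
      · exact ⟨2, by ring⟩
      · exact ⟨1, by ring⟩
      · exact ⟨2, by ring⟩
      · exact ⟨0, by ring⟩
      · exact ⟨0, by ring⟩
      · exact ⟨0, by ring⟩
      · exact ⟨0, by ring⟩
      · exact ⟨2, by ring⟩
    · rintro x hx
      rw [LinearMap.mem_ker, hmem] at hx
      obtain ⟨⟨p, hp⟩, ⟨q, hq⟩, ⟨r, hr⟩⟩ := hx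
      -- parity: q - p is even
      have hpar : (2 : ℤ) ∣ (q - p) := by
        have h1 : (2*(m:ℤ)+1) * (q - (2*(m:ℤ)+1)*p) = (2*(m:ℤ)+1)*(4*(m:ℤ)+4)*r - 2*x 2 := by
          linear_combination hr - hq + (2*(m:ℤ)+1) * hp
        have h2 : (2 : ℤ) ∣ (2*(m:ℤ)+1) * (q - (2*(m:ℤ)+1)*p) := ⟨(2*(m:ℤ)+1)*((m:ℤ)+1)*2*r - x 2, by linarith [h1]⟩
        have h3 : (2 : ℤ) ∣ (q - (2*(m:ℤ)+1)*p) := by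
          rcases Int.even_or_odd (q - (2*(m:ℤ)+1)*p) with h | h
          · exact h.two_dvd
          · exfalso
            have : Odd ((2*(m:ℤ)+1) * (q - (2*(m:ℤ)+1)*p)) := Odd.mul ⟨(m:ℤ), by ring⟩ h
            rw [Int.odd_iff] at this
            omega
        obtain ⟨k, hk⟩ := h3
        exact ⟨k + (m:ℤ)*p, by linarith [hk]⟩
      obtain ⟨k, hk⟩ := hpar
      -- x 2 explicitly
      have hx2 : x 2 = (2*(m:ℤ)+1)*(2*(m:ℤ)+2)*r + (2*(m:ℤ)+1)*((m:ℤ)*p - k) := by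
        have h2 : 2 * x 2 = 2 * ((2*(m:ℤ)+1)*(2*(m:ℤ)+2)*r + (2*(m:ℤ)+1)*((m:ℤ)*p - k)) := by
          linear_combination hr - hq + (2*(m:ℤ)+1) * hp - (2*(m:ℤ)+1) * hk
        linarith [h2]
      have hxeq : x = (q - 2*r) • ![2 * (m : ℤ) + 1, 2 * m + 1, 2 * m ^ 2 + m]
          + r • ![0, 4 * (m : ℤ) + 2, 4 * m ^ 2 + 4 * m + 1]
          + (r - k) • ![4 * (m : ℤ) + 2, 0, 4 * m ^ 2 + 4 * m + 1] := by
        funext i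
        fin_cases i <;>
          simp only [Fin.zero_eta, Fin.mk_one, Fin.reduceFinMk, Pi.add_apply, Pi.smul_apply,
            smul_eq_mul, Matrix.cons_val_zero,
            Matrix.cons_val_one, Matrix.head_cons, Matrix.cons_val_two, Matrix.tail_cons]
        · linear_combination hp - (2*(m:ℤ)+1) * hk
        · linear_combination hq
        · linear_combination hx2 - (m:ℤ)*(2*(m:ℤ)+1) * hk
      rw [hxeq]
      refine Submodule.add_mem _ (Submodule.add_mem _ ?_ ?_) ?_ <;>
        refine Submodule.smul_mem _ _ (Submodule.subset_span ?_) <;> simp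
  refine ⟨((Submodule.quotEquivOfEq _ _ hker).trans
    (LinearMap.quotKerEquivOfSurjective φ ?_)).toAddEquiv⟩
  rintro ⟨u, v, w⟩
  obtain ⟨i, rfl⟩ := ZMod.intCast_surjective u
  obtain ⟨j, rfl⟩ := ZMod.intCast_surjective v
  obtain ⟨k, rfl⟩ := ZMod.intCast_surjective w
  refine ⟨![i, (2*(m:ℤ)+1)*i + (2*(m:ℤ)+2)*j + (2*(m:ℤ)+1)*k, -((m:ℤ)+1)*j - (m:ℤ)*k], ?_⟩
  have : φ ![i, (2*(m:ℤ)+1)*i + (2*(m:ℤ)+2)*j + (2*(m:ℤ)+1)*k, -((m:ℤ)+1)*j - (m:ℤ)*k]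
      = ((i : ZMod (2*m+1)), (((2*(m:ℤ)+1)*i + (2*(m:ℤ)+2)*j + (2*(m:ℤ)+1)*k : ℤ) : ZMod (2*m+1)),
        ((2*(-((m:ℤ)+1)*j - (m:ℤ)*k) + ((2*(m:ℤ)+1)*i + (2*(m:ℤ)+2)*j + (2*(m:ℤ)+1)*k) - (2*(m:ℤ)+1)*i : ℤ) : ZMod ((2*m+1)*(4*m+4)))) := rfl
  rw [this]
  refine Prod.ext ?_ (Prod.ext ?_ ?_)
  · rfl
  · show (((2*(m:ℤ)+1)*i + (2*(m:ℤ)+2)*j + (2*(m:ℤ)+1)*k : ℤ) : ZMod (2*m+1)) = (j : ZMod (2*m+1))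
    have h0 : ((2*m+1 : ℕ) : ZMod (2*m+1)) = 0 := ZMod.natCast_self _
    push_cast at h0 ⊢
    linear_combination ((i : ZMod (2*m+1)) + (j : ZMod (2*m+1)) + (k : ZMod (2*m+1))) * h0
  · show ((2*(-((m:ℤ)+1)*j - (m:ℤ)*k) + ((2*(m:ℤ)+1)*i + (2*(m:ℤ)+2)*j + (2*(m:ℤ)+1)*k) - (2*(m:ℤ)+1)*i : ℤ) : ZMod ((2*m+1)*(4*m+4))) = (k : ZMod ((2*m+1)*(4*m+4)))
    push_cast
    ring
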